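/- Let G be a strongly regular graph with parameters (19, 6, 1, 2), let {a, b, c} be a triangle in G, and let A be the set of neighbors of a excluding b and c. Then every vertex of A is adjacent to exactly one other vertex of A; that is, the induced subgraph of G on A is a perfect matching on the 4 vertices of A. -/
import Mathlib


/-- For a triangle {a,b,c} in an srg(19,6,1,2), every vertex of A is adjacent to exactly
one other vertex of A: the induced subgraph on the 4 vertices of A is a perfect matching. -/
theorem srg_19_6_1_2_A_perfect_matching
    {V : Type} [Fintype V] [DecidableEq V] (G : SimpleGraph V) [DecidableRel G.Adj]
    (h : G.IsSRGWith 19 6 1 2) (a b c : V)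
    (hab : G.Adj a b) (hac : G.Adj a c) (hbc : G.Adj b c)
    (A : Finset V)
    (hA : A = Finset.univ.filter (fun v => G.Adj a v ∧ v ≠ b ∧ v ≠ c)) :
    A.card = 4 ∧ ∀ x ∈ A, ∃! y : V, y ∈ A ∧ y ≠ x ∧ G.Adj x y := by
  classical
  -- uniqueness of common neighbors of adjacent vertices
  have huniq : ∀ u w, G.Adj u w → ∀ z₁ z₂, z₁ ∈ G.commonNeighbors u w →
      z₂ ∈ G.commonNeighbors u w → z₁ = z₂ := by
    intro u w huw z₁ z₂ h1 h2
    have hc := h.of_adj u w huw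
    have hle : Fintype.card (G.commonNeighbors u w) ≤ 1 := by omega
    have := Fintype.card_le_one_iff.mp hle ⟨z₁, h1⟩ ⟨z₂, h2⟩
    exact congrArg Subtype.val this
  have hnonempty : ∀ u w, G.Adj u w → ∃ z, z ∈ G.commonNeighbors u w := by
    intro u w huw
    have hc := h.of_adj u w huw
    have hpos : 0 < Fintype.card (G.commonNeighbors u w) := by omega
    obtain ⟨⟨z, hz⟩⟩ := Fintype.card_pos_iff.mp hpos
    exact ⟨z, hz⟩
  have hmemA : ∀ v, v ∈ A ↔ G.Adj a v ∧ v ≠ b ∧ v ≠ c := by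
    intro v; simp [hA]
  -- card of A
  have hAeq : A = (G.neighborFinset a) \ {b, c} := by
    ext v
    simp [hmemA, SimpleGraph.mem_neighborFinset, Finset.mem_sdiff, and_comm]
  have hsub : ({b, c} : Finset V) ⊆ G.neighborFinset a := by
    intro v hv
    simp only [Finset.mem_insert, Finset.mem_singleton] at hv
    rcases hv with rfl | rfl
    · simpa [SimpleGraph.mem_neighborFinset] using hab
    · simpa [SimpleGraph.mem_neighborFinset] using hac
  have hbc' : b ≠ c := G.ne_of_adj hbc
  have hdeg : (G.neighborFinset a).card = 6 := h.regular a
  have hcard : A.card = 4 := by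
    rw [hAeq, Finset.card_sdiff_of_subset hsub, hdeg, Finset.card_insert_of_notMem (by simp [hbc']),
      Finset.card_singleton]
  refine ⟨hcard, ?_⟩
  intro x hx
  obtain ⟨hax, hxb, hxc⟩ := (hmemA x).mp hx
  -- x is not adjacent to b or c
  have hxnb : ¬ G.Adj x b := by
    intro hadj
    have hxmem : x ∈ G.commonNeighbors a b :=
      (SimpleGraph.mem_commonNeighbors G).mpr ⟨hax, hadj.symm⟩
    have hcmem : c ∈ G.commonNeighbors a b :=
      (SimpleGraph.mem_commonNeighbors G).mpr ⟨hac, hbc⟩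
    exact hxc (huniq a b hab x c hxmem hcmem)
  have hxnc : ¬ G.Adj x c := by
    intro hadj
    have hxmem : x ∈ G.commonNeighbors a c :=
      (SimpleGraph.mem_commonNeighbors G).mpr ⟨hax, hadj.symm⟩
    have hbmem : b ∈ G.commonNeighbors a c :=
      (SimpleGraph.mem_commonNeighbors G).mpr ⟨hab, hbc.symm⟩
    exact hxb (huniq a c hac x b hxmem hbmem)
  -- the unique common neighbor of a and x
  obtain ⟨z, hz⟩ := hnonempty a x hax
  obtain ⟨haz, hxz⟩ := (SimpleGraph.mem_commonNeighbors G).mp hz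
  have hzb : z ≠ b := by rintro rfl; exact hxnb hxz
  have hzc : z ≠ c := by rintro rfl; exact hxnc hxz
  have hzx : z ≠ x := fun hzx => G.irrefl (hzx ▸ hxz)
  refine ⟨z, ⟨(hmemA z).mpr ⟨haz, hzb, hzc⟩, hzx, hxz⟩, ?_⟩
  rintro y ⟨hyA, hyx, hxy⟩
  obtain ⟨hay, _, _⟩ := (hmemA y).mp hyA
  exact huniq a x hax y z ((SimpleGraph.mem_commonNeighbors G).mpr ⟨hay, hxy⟩) hz
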